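/- Let n ≥ 1 and let a₁, …, a_n ∈ ℂ be such that Σ_{i∈T} a_i ≠ 0 for every nonempty subset T ⊆ {1, …, n}. Let A ⊆ ℂ[z₁, …, z_n] be the ℂ-subalgebra generated by the deformed Newton sums p_m = a₁ z₁^m + … + a_n z_n^m for all m ≥ 1. Then ℂ[z₁, …, z_n] is a finitely generated A-module. -/

import Mathlib

open scoped BigOperators

open MvPolynomial

private lemma deg_add {σ : Type*} (u v : σ →₀ ℕ) :
    (u + v).degree = u.degree + v.degree := by
  simp [Finsupp.degree_eq_weight_one, map_add]

private lemma hc_mul_homog {σ : Type*} [DecidableEq σ] (q p : MvPolynomial σ ℂ) {m d : ℕ}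
    (hp : p.IsHomogeneous m) (hmd : m ≤ d) :
    homogeneousComponent d (q * p) = homogeneousComponent (d - m) q * p := by
  ext w
  rw [coeff_homogeneousComponent, coeff_mul, coeff_mul]
  by_cases h : w.degree = d
  · rw [if_pos h]
    refine Finset.sum_congr rfl fun x hx => ?_
    rw [Finset.HasAntidiagonal.mem_antidiagonal] at hx
    by_cases hp2 : coeff x.2 p = 0
    · simp [hp2]
    · have h2 : x.2.degree = m := by simpa [Finsupp.degree_eq_weight_one, Pi.one_def] using hp hp2
      have hadd : x.1.degree + x.2.degree = d := by rw [← deg_add, hx, h]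
      have h1 : x.1.degree = d - m := by omega
      rw [coeff_homogeneousComponent, if_pos h1]
  · rw [if_neg h]
    refine (Finset.sum_eq_zero fun x hx => ?_).symm
    rw [Finset.HasAntidiagonal.mem_antidiagonal] at hx
    rw [coeff_homogeneousComponent]
    by_cases hp2 : coeff x.2 p = 0
    · simp [hp2]
    · have h2 : x.2.degree = m := by simpa [Finsupp.degree_eq_weight_one, Pi.one_def] using hp hp2
      have h1 : x.1.degree ≠ d - m := by
        intro h1
        apply h
        rw [← hx, deg_add, h1, h2]
        omega
      rw [if_neg h1, zero_mul]

private lemma hc_mul_homog_lt {σ : Type*} [DecidableEq σ] (q p : MvPolynomial σ ℂ) {m d : ℕ}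
    (hp : p.IsHomogeneous m) (hmd : d < m) :
    homogeneousComponent d (q * p) = 0 := by
  ext w
  rw [coeff_homogeneousComponent, coeff_zero]
  by_cases h : w.degree = d
  · rw [if_pos h, coeff_mul]
    refine Finset.sum_eq_zero fun x hx => ?_
    rw [Finset.HasAntidiagonal.mem_antidiagonal] at hx
    by_cases hp2 : coeff x.2 p = 0
    · simp [hp2]
    · have h2 : x.2.degree = m := by simpa [Finsupp.degree_eq_weight_one, Pi.one_def] using hp hp2
      have hadd : x.1.degree + x.2.degree = d := by rw [← deg_add, hx, h]
      omega
  · rw [if_neg h]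

private lemma zero_of_newton {n : ℕ} (a : Fin n → ℂ)
    (ha : ∀ T : Finset (Fin n), T.Nonempty → ∑ i ∈ T, a i ≠ 0)
    (x : Fin n → ℂ) (hx : ∀ m : ℕ, 1 ≤ m → ∑ i, a i * x i ^ m = 0) : x = 0 := by
  classical
  by_contra hne
  obtain ⟨j, hj⟩ : ∃ j, x j ≠ 0 := by
    by_contra h; push_neg at h; exact hne (funext h)
  set W : Finset ℂ := Finset.image x Finset.univ with hW
  set c : ℂ → ℂ := fun w => ∑ i ∈ Finset.univ.filter fun i => x i = w, a i with hc
  have hsum : ∀ m : ℕ, 1 ≤ m → ∑ w ∈ W, c w * w ^ m = 0 := by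
    intro m hm
    rw [← hx m hm,
      ← Finset.sum_fiberwise_of_maps_to
        (fun i _ => Finset.mem_image_of_mem x (Finset.mem_univ i))
        (fun i => a i * x i ^ m)]
    refine Finset.sum_congr rfl fun w hw => ?_
    rw [hc]
    simp only [Finset.sum_mul]
    refine Finset.sum_congr rfl fun i hi => ?_
    rw [Finset.mem_filter] at hi
    rw [hi.2]
  set q : Polynomial ℂ := Polynomial.X * ∏ w ∈ W.erase (x j),
    (Polynomial.X - Polynomial.C w) with hq
  have hq0 : q.coeff 0 = 0 := by
    rw [hq, Polynomial.mul_coeff_zero, Polynomial.coeff_X_zero, zero_mul]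
  have key : ∑ w ∈ W, c w * q.eval w = 0 := by
    have h1 : ∑ w ∈ W, c w * q.eval w
        = ∑ k ∈ Finset.range (q.natDegree + 1), q.coeff k * ∑ w ∈ W, c w * w ^ k := by
      simp_rw [Polynomial.eval_eq_sum_range, Finset.mul_sum]
      rw [Finset.sum_comm]
      exact Finset.sum_congr rfl fun k _ => Finset.sum_congr rfl fun w _ => by ring
    rw [h1]
    refine Finset.sum_eq_zero fun k _ => ?_
    rcases Nat.eq_zero_or_pos k with rfl | hk1
    · rw [hq0, zero_mul]
    · rw [hsum k hk1, mul_zero]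
  have hxjW : x j ∈ W := Finset.mem_image_of_mem x (Finset.mem_univ j)
  have hzero : ∀ w ∈ W, w ≠ x j → c w * q.eval w = 0 := by
    intro w hw hwj
    have hqw : q.eval w = 0 := by
      rw [hq, Polynomial.eval_mul, Polynomial.eval_prod]
      refine mul_eq_zero_of_right _ ?_
      refine Finset.prod_eq_zero (Finset.mem_erase.mpr ⟨hwj, hw⟩) ?_
      simp
    rw [hqw, mul_zero]
  have hcq : c (x j) * q.eval (x j) = 0 := by
    rw [← key]
    exact (Finset.sum_eq_single (x j) hzero (fun h => absurd hxjW h)).symm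
  have hqx : q.eval (x j) ≠ 0 := by
    rw [hq, Polynomial.eval_mul, Polynomial.eval_X, Polynomial.eval_prod]
    refine mul_ne_zero hj ?_
    rw [Finset.prod_ne_zero_iff]
    intro w hw
    simp only [Polynomial.eval_sub, Polynomial.eval_X, Polynomial.eval_C, sub_ne_zero]
    exact fun h => (Finset.mem_erase.mp hw).1 h.symm
  have hcxj : c (x j) = 0 := by
    rcases mul_eq_zero.mp hcq with h | h
    · exact h
    · exact absurd h hqx
  exact ha (Finset.univ.filter fun i => x i = x j)
    ⟨j, Finset.mem_filter.mpr ⟨Finset.mem_univ j, rfl⟩⟩ hcxj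

/-- let `a₁, …, a_n ∈ ℂ` be such that `Σ_{i ∈ T} a_i ≠ 0` for every
nonempty subset `T`, and let `A ⊆ ℂ[z₁, …, z_n]` be the subalgebra generated by the
deformed Newton sums `p_m = Σ_i a_i z_i^m`, `m ≥ 1`.  Then `ℂ[z₁, …, z_n]` is a
finitely generated `A`-module. -/
theorem polynomialRing_finite_over_deformed_newton (n : ℕ) (hn : 1 ≤ n) (a : Fin n → ℂ)
    (ha : ∀ T : Finset (Fin n), T.Nonempty → ∑ i ∈ T, a i ≠ 0) :
    Module.Finite
      (Algebra.adjoin ℂ {p : MvPolynomial (Fin n) ℂ |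
        ∃ m : ℕ, 1 ≤ m ∧ p = ∑ i, MvPolynomial.C (a i) * MvPolynomial.X i ^ m})
      (MvPolynomial (Fin n) ℂ) := by
  classical
  set S : Set (MvPolynomial (Fin n) ℂ) :=
    {p | ∃ m : ℕ, 1 ≤ m ∧ p = ∑ i, MvPolynomial.C (a i) * MvPolynomial.X i ^ m} with hS
  set B := Algebra.adjoin ℂ S with hB
  set I : Ideal (MvPolynomial (Fin n) ℂ) := Ideal.span S with hI
  -- every `X i` is in the radical of `I`
  have hXrad : ∀ i : Fin n, (X i : MvPolynomial (Fin n) ℂ) ∈ I.radical := by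
    intro i
    rw [← vanishingIdeal_zeroLocus_eq_radical (K := ℂ), mem_vanishingIdeal_iff]
    intro x hx
    rw [mem_zeroLocus_iff] at hx
    have hx0 : x = 0 := by
      refine zero_of_newton a ha x fun m hm => ?_
      have := hx (∑ i, MvPolynomial.C (a i) * MvPolynomial.X i ^ m)
        (Ideal.subset_span ⟨m, hm, rfl⟩)
      simpa using this
    simp [hx0]
  -- a uniform exponent
  obtain ⟨K, hK⟩ : ∃ K : ℕ, ∀ i : Fin n, (X i : MvPolynomial (Fin n) ℂ) ^ K ∈ I := by
    choose f hf using fun i => (hXrad i : ∃ k, (X i : MvPolynomial (Fin n) ℂ) ^ k ∈ I)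
    refine ⟨Finset.univ.sup f, fun i => ?_⟩
    have hle : f i ≤ Finset.univ.sup f := Finset.le_sup (Finset.mem_univ i)
    have : (X i : MvPolynomial (Fin n) ℂ) ^ Finset.univ.sup f
        = X i ^ (Finset.univ.sup f - f i) * X i ^ f i := by
      rw [← pow_add, Nat.sub_add_cancel hle]
    rw [this]
    exact Ideal.mul_mem_left _ _ (hf i)
  -- the generating monomials
  set G : Finset (MvPolynomial (Fin n) ℂ) :=
    Finset.image (fun f : Fin n → Fin (K + 1) =>
      (monomial (Finsupp.equivFunOnFinite.symm fun i => ((f i : ℕ))) 1 :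
        MvPolynomial (Fin n) ℂ)) Finset.univ with hG
  set M : Submodule B (MvPolynomial (Fin n) ℂ) := Submodule.span B (G : Set _) with hM
  have hCmem : ∀ z : ℂ, (MvPolynomial.C z : MvPolynomial (Fin n) ℂ) ∈ B := by
    intro z
    have : (MvPolynomial.C z : MvPolynomial (Fin n) ℂ) = algebraMap ℂ _ z := rfl
    rw [this]
    exact Subalgebra.algebraMap_mem B z
  have hsmul : ∀ (b : MvPolynomial (Fin n) ℂ) (hb : b ∈ B) (r : MvPolynomial (Fin n) ℂ),
      r ∈ M → b * r ∈ M := by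
    intro b hb r hr
    have := Submodule.smul_mem M (⟨b, hb⟩ : B) hr
    exact this
  -- main induction
  have main : ∀ d : ℕ, ∀ v : Fin n →₀ ℕ, v.degree = d →
      (monomial v 1 : MvPolynomial (Fin n) ℂ) ∈ M := by
    intro d
    induction d using Nat.strong_induction_on with
    | _ d IH =>
    have hhom : ∀ e, e < d → ∀ p : MvPolynomial (Fin n) ℂ, p.IsHomogeneous e → p ∈ M := by
      intro e he p hp
      rw [p.as_sum]
      refine Submodule.sum_mem M fun v hv => ?_
      have hdeg : v.degree = e := by simpa [Finsupp.degree_eq_weight_one, Pi.one_def] using hp (mem_support_iff.mp hv)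
      have h1 : (monomial v 1 : MvPolynomial (Fin n) ℂ) ∈ M := IH e he v hdeg
      have h2 : (monomial v (coeff v p) : MvPolynomial (Fin n) ℂ)
          = MvPolynomial.C (coeff v p) * monomial v 1 := by
        rw [C_mul_monomial, mul_one]
      rw [h2]
      exact hsmul _ (hCmem _) _ h1
    intro v hv
    by_cases hsmall : ∀ i, v i ≤ K
    · apply Submodule.subset_span
      refine Finset.mem_coe.mpr (Finset.mem_image.mpr
        ⟨fun i => ⟨v i, Nat.lt_succ_of_le (hsmall i)⟩, Finset.mem_univ _, ?_⟩)
      congr 1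
      have : (fun i => ((⟨v i, Nat.lt_succ_of_le (hsmall i)⟩ : Fin (K + 1)) : ℕ)) = ⇑v := rfl
      rw [this, Finsupp.equivFunOnFinite_symm_coe]
    · push_neg at hsmall
      obtain ⟨i, hi⟩ := hsmall
      have hd1 : K < d := lt_of_lt_of_le hi (hv ▸ Finsupp.le_degree i v)
      set ν : Fin n →₀ ℕ := v - Finsupp.single i K with hν
      have hvν : ν + Finsupp.single i K = v := by
        ext t
        rw [Finsupp.add_apply, hν, Finsupp.tsub_apply]
        rcases eq_or_ne t i with rfl | ht
        · rw [Finsupp.single_eq_same]; omega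
        · rw [Finsupp.single_eq_of_ne' (Ne.symm ht)]; omega
      obtain ⟨cc, hccS, hccsum⟩ := Submodule.mem_span_set.mp (hK i)
      have hrepr : (monomial v 1 : MvPolynomial (Fin n) ℂ)
          = ∑ s ∈ cc.support, (cc s * monomial ν 1) * s := by
        have h1 : (monomial v 1 : MvPolynomial (Fin n) ℂ)
            = monomial ν 1 * X i ^ K := by
          rw [X_pow_eq_monomial, monomial_mul, hvν, mul_one]
        have h2 : (X i : MvPolynomial (Fin n) ℂ) ^ K = ∑ s ∈ cc.support, cc s * s := by
          rw [← hccsum]; rfl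
        rw [h1, h2, Finset.mul_sum]
        exact Finset.sum_congr rfl fun s _ => by ring
      have hμ : homogeneousComponent d (monomial v 1 : MvPolynomial (Fin n) ℂ)
          = monomial v 1 := by
        rw [homogeneousComponent_of_mem
          ((mem_homogeneousSubmodule _ _).mpr (isHomogeneous_monomial 1 hv)), if_pos rfl]
      have hfin : (monomial v 1 : MvPolynomial (Fin n) ℂ)
          = ∑ s ∈ cc.support, homogeneousComponent d ((cc s * monomial ν 1) * s) := by
        rw [← map_sum, ← hrepr, hμ]
      rw [hfin]
      refine Submodule.sum_mem M fun s hs => ?_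
      obtain ⟨m, hm1, hsm⟩ := hccS hs
      have hshom : s.IsHomogeneous m := by
        rw [hsm]
        exact IsHomogeneous.sum _ _ _ fun k _ => isHomogeneous_C_mul_X_pow (a k) k m
      have hsB : s ∈ B := Algebra.subset_adjoin (hccS hs)
      by_cases hmd : m ≤ d
      · rw [hc_mul_homog _ _ hshom hmd]
        have h1 : homogeneousComponent (d - m) (cc s * monomial ν 1) ∈ M :=
          hhom (d - m) (by omega) _ (homogeneousComponent_isHomogeneous _ _)
        rw [mul_comm]
        exact hsmul _ hsB _ h1
      · rw [hc_mul_homog_lt _ _ hshom (by omega)]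
        exact Submodule.zero_mem M
  refine ⟨⟨G, ?_⟩⟩
  rw [eq_top_iff]
  intro f _
  rw [f.as_sum]
  refine Submodule.sum_mem _ fun v hv => ?_
  have h1 : (monomial v 1 : MvPolynomial (Fin n) ℂ) ∈ M := main v.degree v rfl
  have h2 : (monomial v (coeff v f) : MvPolynomial (Fin n) ℂ)
      = MvPolynomial.C (coeff v f) * monomial v 1 := by
    rw [C_mul_monomial, mul_one]
  rw [h2]
  exact hsmul _ (hCmem _) _ h1
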